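/- Let P be a finite poset and I ⊆ I' poset ideals such that I' \ I is disconnected, decomposing as a disjoint union A ∪ B of nonempty subsets with no Hasse-diagram edges between A and B. Then I ∪ A and I ∪ B are poset ideals of P, and ρ(I) + ρ(I') = ρ(I ∪ A) + ρ(I ∪ B); consequently conv({ρ(I), ρ(I')}) is not an edge of the order polytope O(P). -/

import Mathlib

open Set

variable {α : Type*} [Fintype α] [PartialOrder α]

/-- A poset ideal (down-set) of a poset. -/
def IsPosetIdeal (I : Set α) : Prop := ∀ ⦃a b : α⦄, a ≤ b → b ∈ I → a ∈ I

/-- The indicator vector of a subset. -/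
noncomputable def rho (I : Set α) : α → ℝ := I.indicator 1

/-- The order polytope of a finite poset. -/
noncomputable def orderPolytope (α : Type*) [Fintype α] [PartialOrder α] : Set (α → ℝ) :=
  convexHull ℝ {x | ∃ I : Set α, IsPosetIdeal I ∧ x = rho I}

/-- A subset of a poset is connected if the induced subgraph of the Hasse diagram is connected. -/
def ConnectedIn (S : Set α) : Prop := ((SimpleGraph.hasse α).induce S).Connected

/-- `conv {v, w}` is an edge (1-dimensional face) of the polytope `P`. -/
def IsEdgeOf (P : Set (α → ℝ)) (v w : α → ℝ) : Prop :=
  v ≠ w ∧ IsExtreme ℝ P (segment ℝ v w)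

theorem disconnected_not_edge (I I' A B : Set α)
    (hI : IsPosetIdeal I) (hI' : IsPosetIdeal I') (hsub : I ⊆ I')
    (hA : A.Nonempty) (hB : B.Nonempty) (hdisj : Disjoint A B) (hunion : A ∪ B = I' \ I)
    (hnoedge : ∀ a ∈ A, ∀ b ∈ B, ¬ (SimpleGraph.hasse α).Adj a b) :
    IsPosetIdeal (I ∪ A) ∧ IsPosetIdeal (I ∪ B) ∧
      rho I + rho I' = rho (I ∪ A) + rho (I ∪ B) ∧
      ¬ IsEdgeOf (orderPolytope α) (rho I) (rho I') := by
  have hAsub : A ⊆ I' \ I := hunion ▸ Set.subset_union_left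
  have hBsub : B ⊆ I' \ I := hunion ▸ Set.subset_union_right
  -- key lemma: going down from A stays in I ∪ A (and symmetric)
  have key : ∀ (X Y : Set α), X ∪ Y = I' \ I →
      (∀ a ∈ X, ∀ b ∈ Y, ¬ (SimpleGraph.hasse α).Adj a b) →
      ∀ a b : α, a ≤ b → b ∈ X → a ∈ I ∪ X := by
    intro X Y hXY hne a
    induction a using WellFoundedGT.induction with
    | _ a IH =>
      intro b hab hbX
      rcases eq_or_lt_of_le hab with rfl | hlt
      · exact Or.inr hbX
      · obtain ⟨c, hac, hcb⟩ := exists_covBy_le_of_lt hlt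
        rcases IH c hac.lt b hcb hbX with hcI | hcX
        · exact Or.inl (hI hac.le hcI)
        · have haI' : a ∈ I' := by
            have : c ∈ I' := ((hXY ▸ Set.subset_union_left) hcX).1
            exact hI' hac.le this
          by_cases haI : a ∈ I
          · exact Or.inl haI
          · have : a ∈ X ∪ Y := hXY ▸ ⟨haI', haI⟩
            rcases this with haX | haY
            · exact Or.inr haX
            · exact absurd (SimpleGraph.hasse_adj.mpr (Or.inr hac) :
                (SimpleGraph.hasse α).Adj c a) (hne c hcX a haY)
  have hIA : IsPosetIdeal (I ∪ A) := by
    intro a b hab hb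
    rcases hb with hb | hb
    · exact Or.inl (hI hab hb)
    · exact key A B hunion (fun a ha b hb h => hnoedge a ha b hb h) a b hab hb
  have hIB : IsPosetIdeal (I ∪ B) := by
    intro a b hab hb
    rcases hb with hb | hb
    · exact Or.inl (hI hab hb)
    · exact key B A (Set.union_comm B A ▸ hunion) (fun b hb a ha h => hnoedge a ha b hb h.symm)
        a b hab hb
  have hsum : rho I + rho I' = rho (I ∪ A) + rho (I ∪ B) := by
    funext x
    simp only [Pi.add_apply, rho, Set.indicator]
    by_cases hxI : x ∈ I
    · have hxI' : x ∈ I' := hsub hxI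
      simp [hxI, hxI']
    · by_cases hxI' : x ∈ I'
      · have hx : x ∈ A ∪ B := hunion ▸ ⟨hxI', hxI⟩
        rcases hx with hxA | hxB
        · have hxB : x ∉ B := fun h => hdisj.ne_of_mem hxA h rfl
          simp [hxI, hxI', hxA, hxB]
        · have hxA : x ∉ A := fun h => hdisj.ne_of_mem h hxB rfl
          simp [hxI, hxI', hxA, hxB]
      · have hxA : x ∉ A := fun h => hxI' (hAsub h).1
        have hxB : x ∉ B := fun h => hxI' (hBsub h).1
        simp [hxI, hxI', hxA, hxB]
  refine ⟨hIA, hIB, hsum, ?_⟩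
  rintro ⟨hne, hext⟩
  obtain ⟨a₀, ha₀⟩ := hA
  obtain ⟨b₀, hb₀⟩ := hB
  have ha₀I : a₀ ∉ I := (hAsub ha₀).2
  have hb₀I : b₀ ∉ I := (hBsub hb₀).2
  have hb₀I' : b₀ ∈ I' := (hBsub hb₀).1
  have ha₀B : a₀ ∉ B := fun h => hdisj.ne_of_mem ha₀ h rfl
  have hxP : rho (I ∪ A) ∈ orderPolytope α :=
    subset_convexHull ℝ _ ⟨I ∪ A, hIA, rfl⟩
  have hyP : rho (I ∪ B) ∈ orderPolytope α :=
    subset_convexHull ℝ _ ⟨I ∪ B, hIB, rfl⟩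
  -- the midpoint
  set m : α → ℝ := (1/2 : ℝ) • rho I + (1/2 : ℝ) • rho I'
  have hm_seg : m ∈ segment ℝ (rho I) (rho I') :=
    ⟨1/2, 1/2, by norm_num, by norm_num, by norm_num, rfl⟩
  have hm_open : m ∈ openSegment ℝ (rho (I ∪ A)) (rho (I ∪ B)) := by
    refine ⟨1/2, 1/2, by norm_num, by norm_num, by norm_num, ?_⟩
    show _ = m
    rw [← smul_add, ← hsum]
    simp [m, smul_add]
  have hmem := hext.2 hxP hyP hm_seg hm_open
  obtain ⟨s, t, hs, ht, hst, heq⟩ := hmem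
  have hb : (s • rho I + t • rho I') b₀ = rho (I ∪ A) b₀ := by rw [heq]
  have hb₀A : b₀ ∉ A := fun h => hdisj.ne_of_mem h hb₀ rfl
  have hval : rho (I ∪ A) b₀ = 0 := by
    simp [rho, Set.indicator, hb₀I, hb₀A]
  have hIb : rho I b₀ = 0 := by simp [rho, Set.indicator, hb₀I]
  have hI'b : rho I' b₀ = 1 := by simp [rho, Set.indicator, hb₀I']
  have ht0 : t = 0 := by
    have := hb
    simp [hIb, hI'b, hval] at this
    linarith
  have hs1 : s = 1 := by linarith [hst, ht0]
  have ha : (s • rho I + t • rho I') a₀ = rho (I ∪ A) a₀ := by rw [heq]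
  have hIa : rho I a₀ = 0 := by simp [rho, Set.indicator, ha₀I]
  have hvala : rho (I ∪ A) a₀ = 1 := by simp [rho, Set.indicator, ha₀]
  rw [hs1, ht0] at ha
  simp [hIa, hvala] at ha
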